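/- Let A ∈ SL(n, ℤ) with n ≥ 4, with irreducible characteristic polynomial f, and suppose det(I − Λ² A) = ±1. Then f ≠ f*, where f*(x) = (−x)ⁿ f(1/x) is the signed reciprocal polynomial. -/

import Mathlib

open ExteriorAlgebra Polynomial

open TensorProduct



section Theta
variable {R : Type*} [CommRing R] {M : Type*} [AddCommGroup M] [Module R M]

/-- The alternating bilinear form `(x, y) ↦ φ x * ψ y - φ y * ψ x`. -/
def altBilin (φ ψ : M →ₗ[R] R) : M [⋀^Fin 2]→ₗ[R] R where
  toFun v := φ (v 0) * ψ (v 1) - φ (v 1) * ψ (v 0)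
  map_update_add' := by
    intro _ v i x y
    fin_cases i <;>
      simp [Function.update_apply, map_add] <;> ring
  map_update_smul' := by
    intro _ v i c x
    fin_cases i <;>
      simp [Function.update_apply, map_smul, smul_eq_mul] <;> ring
  map_eq_zero_of_eq' := by
    intro v i j hij hne
    fin_cases i <;> fin_cases j
    · exact absurd rfl hne
    · show φ (v 0) * ψ (v 1) - φ (v 1) * ψ (v 0) = 0
      rw [show v 0 = v 1 from hij]; ring
    · show φ (v 0) * ψ (v 1) - φ (v 1) * ψ (v 0) = 0
      rw [show v 1 = v 0 from hij]; ring
    · exact absurd rfl hne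

/-- A linear functional on the exterior algebra extracting the `altBilin φ ψ` coefficient
in degree 2. -/
noncomputable def theta (φ ψ : M →ₗ[R] R) : ExteriorAlgebra R M →ₗ[R] R :=
  liftAlternating (Function.update (0 : ∀ i, M [⋀^Fin i]→ₗ[R] R) 2 (altBilin φ ψ))

theorem theta_ι_mul_ι (φ ψ : M →ₗ[R] R) (x y : M) :
    theta φ ψ (ι R x * ι R y) = φ x * ψ y - φ y * ψ x := by
  rw [theta, liftAlternating_ι_mul, liftAlternating_ι]
  have h2 : (Function.update (0 : ∀ i, M [⋀^Fin i]→ₗ[R] R) 2 (altBilin φ ψ)) 2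
      = altBilin φ ψ := Function.update_self _ _ _
  show ((Function.update (0 : ∀ i, M [⋀^Fin i]→ₗ[R] R) 2 (altBilin φ ψ) 2).curryLeft x) ![y]
      = φ x * ψ y - φ y * ψ x
  rw [h2]
  simp [AlternatingMap.curryLeft, altBilin]

end Theta


section Basis2
variable {R : Type*} [CommRing R] {n : ℕ}

/-- standard basis vector -/
def stdv (i : Fin n) : Fin n → R := fun j => if i = j then 1 else 0

theorem ext_ι_anticomm (x y : Fin n → R) :
    ι R x * ι R y = -(ι R y * ι R x) := by
  have h := ι_sq_zero (R := R) (x + y)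
  rw [map_add, add_mul, mul_add, mul_add, ι_sq_zero, ι_sq_zero, zero_add, add_zero] at h
  exact eq_neg_of_add_eq_zero_left h

theorem wedge_mem (x y : Fin n → R) : ι R x * ι R y ∈ ⋀[R]^2 (Fin n → R) := by
  rw [show (⋀[R]^2 (Fin n → R))
      = LinearMap.range (ι R (M := Fin n → R)) * LinearMap.range (ι R) from pow_two _]
  exact Submodule.mul_mem_mul ⟨x, rfl⟩ ⟨y, rfl⟩

/-- generic bilinear expansion over the standard basis of `Fin n → R` -/
theorem bilin_expand {N : Type*} [AddCommGroup N] [Module R N]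
    (B : (Fin n → R) →ₗ[R] (Fin n → R) →ₗ[R] N) (x y : Fin n → R) :
    B x y = ∑ i, ∑ j, (x i * y j) • B (stdv i) (stdv j) := by
  conv_lhs => rw [pi_eq_sum_univ x]
  rw [map_sum, LinearMap.sum_apply]
  refine Finset.sum_congr rfl fun i _ => ?_
  rw [map_smul, LinearMap.smul_apply]
  conv_lhs => rw [pi_eq_sum_univ y]
  rw [map_sum, Finset.smul_sum]
  refine Finset.sum_congr rfl fun j _ => ?_
  rw [map_smul, smul_smul]
  rfl

/-- The bilinear wedge map into the exterior algebra. -/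
noncomputable def wedgeE : (Fin n → R) →ₗ[R] (Fin n → R) →ₗ[R] ExteriorAlgebra R (Fin n → R) :=
  LinearMap.mk₂ R (fun x y => ι R x * ι R y)
    (fun x x' y => by simp only [map_add, add_mul])
    (fun c x y => by simp only [map_smul, smul_mul_assoc])
    (fun x y y' => by simp only [map_add, mul_add])
    (fun c x y => by simp only [map_smul, mul_smul_comm])

@[simp] theorem wedgeE_apply (x y : Fin n → R) : wedgeE x y = ι R x * ι R y := rfl

/-- index type for pairs i < j -/
abbrev IndexI (n : ℕ) := {p : Fin n × Fin n // p.1 < p.2}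

noncomputable def famW (p : IndexI n) : ⋀[R]^2 (Fin n → R) :=
  ⟨ι R (stdv p.1.1) * ι R (stdv p.1.2), wedge_mem _ _⟩

theorem theta_wedge (k l i j : Fin n) :
    theta (LinearMap.proj (R := R) (φ := fun _ : Fin n => R) k)
      (LinearMap.proj (R := R) (φ := fun _ : Fin n => R) l) (ι R (stdv i) * ι R (stdv j))
      = ((if i = k then (1:R) else 0) * (if j = l then (1:R) else 0)
        - (if j = k then (1:R) else 0) * (if i = l then (1:R) else 0)) := by
  rw [theta_ι_mul_ι]
  simp [stdv, LinearMap.proj_apply, eq_comm]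

theorem famW_indep : LinearIndependent R (famW (R := R) (n := n)) := by
  rw [Fintype.linearIndependent_iff]
  intro g hg p
  have hg' : ((∑ q, g q • famW q : ⋀[R]^2 (Fin n → R)) :
      ExteriorAlgebra R (Fin n → R)) = 0 := by rw [hg]; rfl
  push_cast [Submodule.coe_sum, SetLike.val_smul] at hg'
  have h2 := congrArg (theta (LinearMap.proj (R := R) p.1.1) (LinearMap.proj p.1.2)) hg'
  rw [map_sum, map_zero] at h2
  have h3 : ∀ q : IndexI n,
      theta (LinearMap.proj (R := R) p.1.1) (LinearMap.proj p.1.2)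
        (g q • ((famW q : ⋀[R]^2 (Fin n → R)) : ExteriorAlgebra R (Fin n → R)))
      = g q * (if q = p then 1 else 0) := by
    intro q
    have : ((famW q : ⋀[R]^2 (Fin n → R)) : ExteriorAlgebra R (Fin n → R))
        = ι R (stdv q.1.1) * ι R (stdv q.1.2) := rfl
    rw [map_smul, smul_eq_mul, this, theta_wedge]
    congr 1
    by_cases h1 : q.1.1 = p.1.1
    · by_cases h2 : q.1.2 = p.1.2
      · rw [if_pos (Subtype.ext (Prod.ext h1 h2)), if_pos h1, if_pos h2]
        have h3 : ¬ q.1.2 = p.1.1 := fun h => absurd (h1 ▸ h ▸ q.2) (lt_irrefl _)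
        rw [if_neg h3]; ring
      · have hqp : ¬ q = p := fun h => h2 (by rw [h])
        rw [if_neg hqp, if_neg h2]
        by_cases h3 : q.1.2 = p.1.1
        · have h4 : ¬ q.1.1 = p.1.2 := fun h4 =>
            absurd ((q.2.trans_eq h3).trans (p.2.trans_eq h4.symm)) (lt_irrefl _)
          rw [if_neg h4]; ring
        · rw [if_neg h3]; ring
    · have hqp : ¬ q = p := fun h => h1 (by rw [h])
      rw [if_neg hqp, if_neg h1]
      by_cases h3 : q.1.2 = p.1.1
      · have h4 : ¬ q.1.1 = p.1.2 := fun h4 =>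
          absurd ((q.2.trans_eq h3).trans (p.2.trans_eq h4.symm)) (lt_irrefl _)
        rw [if_neg h4]; ring
      · rw [if_neg h3]; ring
  rw [Finset.sum_congr rfl (fun q _ => h3 q)] at h2
  simpa [Finset.sum_ite_eq'] using h2

theorem famW_span :
    ⊤ ≤ Submodule.span R (Set.range (famW (R := R) (n := n))) := by
  rintro ⟨x, hx⟩ -
  have hx2 : x ∈ LinearMap.range (ι R (M := Fin n → R)) * LinearMap.range (ι R) := by
    rw [← show (⋀[R]^2 (Fin n → R))
        = LinearMap.range (ι R (M := Fin n → R)) * LinearMap.range (ι R) from pow_two _]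
    exact hx
  have H : ∃ (hm : x ∈ ⋀[R]^2 (Fin n → R)),
      (⟨x, hm⟩ : ⋀[R]^2 (Fin n → R)) ∈ Submodule.span R (Set.range famW) := by
    refine Submodule.mul_induction_on hx2 ?_ ?_
    · rintro _ ⟨u, rfl⟩ _ ⟨v, rfl⟩
      refine ⟨wedge_mem u v, ?_⟩
      have hexp : (⟨ι R u * ι R v, wedge_mem u v⟩ : ⋀[R]^2 (Fin n → R))
          = ∑ i, ∑ j, (u i * v j) • (⟨ι R (stdv i) * ι R (stdv j), wedge_mem _ _⟩ :
              ⋀[R]^2 (Fin n → R)) := by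
        apply Subtype.ext
        push_cast [Submodule.coe_sum, SetLike.val_smul]
        have := bilin_expand (wedgeE (R := R) (n := n)) u v
        simpa using this
      rw [hexp]
      refine Submodule.sum_mem _ fun i _ => Submodule.sum_mem _ fun j _ =>
        Submodule.smul_mem _ _ ?_
      rcases lt_trichotomy i j with hij | hij | hij
      · exact Submodule.subset_span ⟨⟨(i, j), hij⟩, rfl⟩
      · have : (⟨ι R (stdv i) * ι R (stdv j), wedge_mem _ _⟩ :
            ⋀[R]^2 (Fin n → R)) = 0 := by
          apply Subtype.ext
          show ι R (stdv i) * ι R (stdv j) = 0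
          rw [hij, ι_sq_zero]
        rw [this]; exact Submodule.zero_mem _
      · have : (⟨ι R (stdv i) * ι R (stdv j), wedge_mem _ _⟩ :
            ⋀[R]^2 (Fin n → R)) = -(famW ⟨(j, i), hij⟩) := by
          apply Subtype.ext
          show ι R (stdv i) * ι R (stdv j) = -(ι R (stdv j) * ι R (stdv i))
          exact ext_ι_anticomm _ _
        rw [this]
        exact Submodule.neg_mem _ (Submodule.subset_span ⟨⟨(j, i), hij⟩, rfl⟩)
    · rintro a b ⟨ha1, ha2⟩ ⟨hb1, hb2⟩
      refine ⟨Submodule.add_mem _ ha1 hb1, ?_⟩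
      have : (⟨a + b, Submodule.add_mem _ ha1 hb1⟩ : ⋀[R]^2 (Fin n → R))
          = ⟨a, ha1⟩ + ⟨b, hb1⟩ := rfl
      rw [this]
      exact Submodule.add_mem _ ha2 hb2
  obtain ⟨hm, hmem⟩ := H
  exact hmem

noncomputable def wedgeBasis (R : Type*) [CommRing R] (n : ℕ) :
    Module.Basis (IndexI n) R (⋀[R]^2 (Fin n → R)) :=
  Module.Basis.mk famW_indep famW_span

end Basis2
section DetBij
variable {R : Type*} [CommRing R] {M : Type*} [AddCommGroup M] [Module R M]

theorem bijective_of_isUnit_det {ι : Type*} [Fintype ι] [DecidableEq ι]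
    (b : Module.Basis ι R M) (f : M →ₗ[R] M) (h : IsUnit (LinearMap.det f)) :
    Function.Bijective f := by
  rw [← LinearMap.det_toMatrix b] at h
  have hM : IsUnit (LinearMap.toMatrix b b f) := (Matrix.isUnit_iff_isUnit_det _).mpr h
  obtain ⟨u, hu⟩ := hM
  set g : M →ₗ[R] M := Matrix.toLin b b (↑u⁻¹) with hg
  have h1 : f ∘ₗ g = LinearMap.id := by
    conv_lhs => rw [← Matrix.toLin_toMatrix b b f, hg, ← Matrix.toLin_mul, ← hu,
      Units.mul_inv, Matrix.toLin_one]
  have h2 : g ∘ₗ f = LinearMap.id := by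
    conv_lhs => rw [← Matrix.toLin_toMatrix b b f, hg, ← Matrix.toLin_mul, ← hu,
      Units.inv_mul, Matrix.toLin_one]
  constructor
  · intro x y hxy
    have := congrArg g hxy
    rwa [show ∀ t, g (f t) = t from fun t => by
      rw [← LinearMap.comp_apply, h2, LinearMap.id_apply],
      show ∀ t, g (f t) = t from fun t => by
      rw [← LinearMap.comp_apply, h2, LinearMap.id_apply]] at this
  · intro y
    exact ⟨g y, by rw [← LinearMap.comp_apply, h1, LinearMap.id_apply]⟩

theorem baseChange_bijective (A : Type*) [CommRing A] [Algebra R A]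
    (f : M →ₗ[R] M) (hf : Function.Bijective f) :
    Function.Bijective (f.baseChange A) := by
  set e := LinearEquiv.ofBijective f hf with he
  have hfe : f ∘ₗ (e.symm : M →ₗ[R] M) = LinearMap.id := by
    ext x
    exact e.apply_symm_apply x
  have hef : (e.symm : M →ₗ[R] M) ∘ₗ f = LinearMap.id := by
    ext x
    exact e.symm_apply_apply x
  have h1 : (f.baseChange A) ∘ₗ ((e.symm : M →ₗ[R] M).baseChange A) = LinearMap.id := by
    rw [← LinearMap.baseChange_comp, hfe, LinearMap.baseChange_id]
  have h2 : ((e.symm : M →ₗ[R] M).baseChange A) ∘ₗ (f.baseChange A) = LinearMap.id := by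
    rw [← LinearMap.baseChange_comp, hef, LinearMap.baseChange_id]
  constructor
  · intro x y hxy
    have := congrArg ((e.symm : M →ₗ[R] M).baseChange A) hxy
    rwa [← LinearMap.comp_apply, h2, ← LinearMap.comp_apply (((e.symm : M →ₗ[R] M)).baseChange A),
      h2, LinearMap.id_apply, LinearMap.id_apply] at this
  · intro y
    exact ⟨(e.symm : M →ₗ[R] M).baseChange A y,
      by rw [← LinearMap.comp_apply, h1, LinearMap.id_apply]⟩

end DetBij
section Eig
variable {K : Type*} [Field K] {n : ℕ}

theorem exists_eigenvector_of_root (AK : Matrix (Fin n) (Fin n) K) (lam : K)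
    (h : AK.charpoly.eval lam = 0) :
    ∃ v : Fin n → K, v ≠ 0 ∧ AK.mulVec v = lam • v := by
  have hdet : (lam • (1 : Matrix (Fin n) (Fin n) K) - AK).det = 0 := by
    rw [Matrix.charpoly] at h
    have h2 : (Polynomial.evalRingHom lam) (Matrix.charmatrix AK).det = 0 := h
    rw [RingHom.map_det, RingHom.mapMatrix_apply] at h2
    have h3 : (Matrix.charmatrix AK).map (Polynomial.evalRingHom lam)
        = lam • (1 : Matrix (Fin n) (Fin n) K) - AK := by
      ext i j
      by_cases hij : i = j
      · subst hij
        simp [Matrix.charmatrix_apply_eq, Matrix.map_apply, Matrix.one_apply]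
      · simp [Matrix.charmatrix_apply_ne _ _ _ hij, Matrix.map_apply, Matrix.one_apply, hij]
    rwa [h3] at h2
  obtain ⟨v, hv0, hv⟩ := (Matrix.exists_mulVec_eq_zero_iff).2 hdet
  refine ⟨v, hv0, ?_⟩
  rw [Matrix.sub_mulVec, Matrix.smul_mulVec, Matrix.one_mulVec, sub_eq_zero] at hv
  exact hv.symm

end Eig

/-- The endomorphism of the `k`-th exterior power of `ℤⁿ` induced by an integer matrix `A`. -/
def extPowMap (n k : ℕ) (A : Matrix (Fin n) (Fin n) ℤ) :
    ⋀[ℤ]^k (Fin n → ℤ) →ₗ[ℤ] ⋀[ℤ]^k (Fin n → ℤ) :=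
  (ExteriorAlgebra.map (Matrix.toLin' A)).toLinearMap.restrict (fun x hx => by
    have h1 : Submodule.map (ExteriorAlgebra.map (Matrix.toLin' A)).toLinearMap
        (⋀[ℤ]^k (Fin n → ℤ)) ≤ ⋀[ℤ]^k (Fin n → ℤ) := by
      rw [exteriorPower, Submodule.map_pow]
      refine pow_le_pow_left' ?_ k
      rw [ExteriorAlgebra.ι_range_map_map]
      calc Submodule.map (ι ℤ) (LinearMap.range (Matrix.toLin' A))
          ≤ Submodule.map (ι ℤ) ⊤ := Submodule.map_mono le_top
        _ = LinearMap.range (ι ℤ (M := Fin n → ℤ)) := (LinearMap.range_eq_map _).symm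
    exact h1 ⟨x, hx, rfl⟩)

set_option maxHeartbeats 4000000 in
set_option synthInstance.maxHeartbeats 400000 in
theorem stmt_6 (n : ℕ) (hn : 4 ≤ n) (A : Matrix (Fin n) (Fin n) ℤ) (hA : A.det = 1)
    (hirr : Irreducible A.charpoly)
    (hCS2 : LinearMap.det (1 - extPowMap n 2 A) = 1 ∨
            LinearMap.det (1 - extPowMap n 2 A) = -1) :
    A.charpoly ≠ (-1 : Polynomial ℤ) ^ n * A.charpoly.reverse := by
  intro hf
  classical
  set p := A.charpoly with hp
  have hmono : p.Monic := A.charpoly_monic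
  have hdeg : p.natDegree = n := by
    rw [hp, Matrix.charpoly_natDegree_eq_dim, Fintype.card_fin]
  set q : ℚ[X] := p.map (Int.castRingHom ℚ) with hq
  have hqmono : q.Monic := hmono.map _
  have hqdeg : q.natDegree = n := by rw [hq, hmono.natDegree_map]; exact hdeg
  have hqirr : Irreducible q :=
    (Polynomial.IsPrimitive.Int.irreducible_iff_irreducible_map_cast
      hmono.isPrimitive).mp hirr
  have hqsep : q.Separable := hqirr.separable
  set K := q.SplittingField with hK
  set P : K[X] := p.map (Int.castRingHom K) with hP
  have hPq : P = q.map (algebraMap ℚ K) := by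
    show Polynomial.map (Int.castRingHom K) p
        = Polynomial.map (algebraMap ℚ K) (Polynomial.map (Int.castRingHom ℚ) p)
    rw [Polynomial.map_map]
    exact congrArg (fun f : ℤ →+* K => Polynomial.map f p) (RingHom.ext_int _ _)
  have hPmono : P.Monic := hmono.map _
  have hPdeg : P.natDegree = n := by rw [hP, hmono.natDegree_map]; exact hdeg
  have hcard : Multiset.card P.roots = n := by
    have hsc := (Polynomial.SplittingField.splits q).natDegree_eq_card_roots
    rw [Polynomial.natDegree_map, hqdeg] at hsc
    rw [hPq]; exact hsc.symm
  have hnodup : P.roots.Nodup := by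
    rw [hPq]
    exact Polynomial.nodup_roots (hqsep.map)
  set S := P.roots.toFinset with hS
  have hScard : S.card = n := by rw [hS, Multiset.toFinset_card_of_nodup hnodup, hcard]
  set AK := A.map ⇑(Int.castRingHom K) with hAK
  have hAKchar : AK.charpoly = P := by rw [hAK, hP, Matrix.charpoly_map]
  -- no zero root
  have hc0 : p.coeff 0 = (-1 : ℤ) ^ n := by
    have h1 := A.det_eq_sign_charpoly_coeff
    rw [hA, Fintype.card_fin, ← hp] at h1
    have h2 : ((-1 : ℤ) ^ n) * ((-1 : ℤ) ^ n) = 1 := by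
      rw [← mul_pow]; norm_num
    calc p.coeff 0 = (((-1 : ℤ) ^ n) * ((-1 : ℤ) ^ n)) * p.coeff 0 := by rw [h2, one_mul]
      _ = ((-1 : ℤ) ^ n) * (((-1 : ℤ) ^ n) * p.coeff 0) := by ring
      _ = (-1 : ℤ) ^ n := by rw [← h1, mul_one]
  have hroot0 : (0 : K) ∉ S := by
    intro h0
    rw [hS, Multiset.mem_toFinset, Polynomial.mem_roots'] at h0
    have h1 : P.eval 0 = 0 := h0.2
    rw [← Polynomial.coeff_zero_eq_eval_zero, hP, Polynomial.coeff_map, hc0] at h1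
    simp at h1
  have hSroot : ∀ l ∈ S, P.eval l = 0 := by
    intro l hl
    rw [hS, Multiset.mem_toFinset, Polynomial.mem_roots'] at hl
    exact hl.2
  have hSmem : ∀ l : K, P.eval l = 0 → l ∈ S := by
    intro l hl
    rw [hS, Multiset.mem_toFinset, Polynomial.mem_roots']
    exact ⟨hPmono.ne_zero, hl⟩
  -- reverse identity over K
  have hrev : P = (-1 : K[X]) ^ n * P.reverse := by
    have h1 : P.reverse = (p.reverse).map (Int.castRingHom K) := by
      rw [Polynomial.reverse, Polynomial.reverse, hP, hmono.natDegree_map,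
        Polynomial.reflect_map]
    rw [h1, hP]
    conv_lhs => rw [hf]
    rw [Polynomial.map_mul, Polynomial.map_pow]
    simp
  -- inverse-closure of roots
  have hinvS : ∀ l ∈ S, l⁻¹ ∈ S := by
    intro l hl
    have hl0 : l ≠ 0 := fun h => hroot0 (h ▸ hl)
    have : Invertible l := invertibleOfNonzero hl0
    have h1 : P.eval l = 0 := hSroot l hl
    have h2 : Polynomial.eval₂ (RingHom.id K) (⅟l) P.reverse = 0 := by
      rw [Polynomial.eval₂_reverse_eq_zero_iff]
      rw [show Polynomial.eval₂ (RingHom.id K) l P = P.eval l from rfl]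
      exact h1
    refine hSmem _ ?_
    rw [hrev, Polynomial.eval_mul]
    have h3 : P.reverse.eval l⁻¹ = 0 := by
      rw [← invOf_eq_inv l]
      exact h2
    rw [h3, mul_zero]
  -- pick the pair of roots
  have hSne : S.Nonempty := Finset.card_pos.mp (by rw [hScard]; omega)
  obtain ⟨lam, hlam⟩ := hSne
  have hlam0 : lam ≠ 0 := fun h => hroot0 (h ▸ hlam)
  set mu := lam⁻¹ with hmu
  have hmuS : mu ∈ S := hinvS lam hlam
  have hlm : lam * mu = 1 := mul_inv_cancel₀ hlam0
  have hne : lam ≠ mu := by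
    intro h
    have hsq : lam * lam = 1 := by nth_rewrite 2 [h]; exact hlm
    have haq : Polynomial.aeval lam q = 0 := by
      rw [Polynomial.aeval_def, ← Polynomial.eval_map, ← hPq]
      exact hSroot lam hlam
    have hmin : minpoly ℚ lam = q := (minpoly.eq_of_irreducible_of_monic hqirr haq hqmono).symm
    have hann : Polynomial.aeval lam ((Polynomial.X : ℚ[X]) ^ 2 - 1) = 0 := by
      rw [map_sub, map_pow, Polynomial.aeval_X, map_one, pow_two, hsq, sub_self]
    have hdvd : minpoly ℚ lam ∣ ((Polynomial.X : ℚ[X]) ^ 2 - 1) := minpoly.dvd ℚ lam hann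
    have hXne : ((Polynomial.X : ℚ[X]) ^ 2 - 1) ≠ 0 := by
      intro h0
      have := congrArg Polynomial.natDegree h0
      rw [show ((1 : ℚ[X])) = Polynomial.C 1 from (map_one Polynomial.C).symm,
        Polynomial.natDegree_X_pow_sub_C] at this
      simp at this
    have hd2 : q.natDegree ≤ 2 := by
      rw [← hmin]
      have := Polynomial.natDegree_le_of_dvd hdvd hXne
      rwa [show ((Polynomial.X : ℚ[X]) ^ 2 - 1) = Polynomial.X ^ 2 - Polynomial.C 1 by
          rw [map_one], Polynomial.natDegree_X_pow_sub_C] at this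
    rw [hqdeg] at hd2
    omega
    -- eigenvectors over K
  have heig : ∀ s : {x // x ∈ S}, ∃ v : Fin n → K, v ≠ 0 ∧ AK.mulVec v = (s : K) • v := by
    intro s
    apply exists_eigenvector_of_root
    rw [hAKchar]
    exact hSroot _ s.2
  choose vfun hv0 hveq using heig
  set Aend : Module.End K (Fin n → K) := Matrix.toLin' AK with hAend
  have hAendap : ∀ x, Aend x = AK.mulVec x := fun x => Matrix.toLin'_apply _ _
  have hHasEig : ∀ s : {x // x ∈ S}, Aend.HasEigenvector (s : K) (vfun s) := fun s =>
    ⟨Module.End.mem_eigenspace_iff.2 (by rw [hAendap]; exact hveq s), hv0 s⟩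
  have hindep : LinearIndependent K vfun :=
    Module.End.eigenvectors_linearIndependent' Aend (fun s : {x // x ∈ S} => (s : K))
      Subtype.coe_injective vfun hHasEig
  have hfinne : Nonempty {x // x ∈ S} := ⟨⟨lam, hlam⟩⟩
  have hcardeq : Fintype.card {x // x ∈ S} = Module.finrank K (Fin n → K) := by
    rw [Fintype.card_coe, hScard, Module.finrank_fin_fun]
  set bK := basisOfLinearIndependentOfCardEqFinrank hindep hcardeq with hbKdef
  have hbK : ∀ s, bK s = vfun s := fun s => by
    rw [hbKdef, coe_basisOfLinearIndependentOfCardEqFinrank]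
  set s0 : {x // x ∈ S} := ⟨lam, hlam⟩ with hs0
  set s1 : {x // x ∈ S} := ⟨mu, hmuS⟩ with hs1
  have hs01 : s0 ≠ s1 := fun h => hne (congrArg Subtype.val h)
  set φ := bK.coord s0 with hφdef
  set ψf := bK.coord s1 with hψdef
  have hcoord : ∀ (s t : {x // x ∈ S}), bK.coord t (bK s) = if s = t then 1 else 0 := by
    intro s t
    rw [Module.Basis.coord_apply, Module.Basis.repr_self]
    exact Finsupp.single_apply
  have hφA : ∀ x, φ (Aend x) = lam * φ x := by
    have hle : φ ∘ₗ (Aend : (Fin n → K) →ₗ[K] (Fin n → K)) = lam • φ := by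
      refine bK.ext fun s => ?_
      simp only [LinearMap.comp_apply, LinearMap.smul_apply, smul_eq_mul]
      rw [show (Aend : (Fin n → K) →ₗ[K] (Fin n → K)) (bK s) = (s : K) • bK s by
        rw [hbK s, hAendap, hveq s]]
      rw [map_smul, hφdef, hcoord s s0, smul_eq_mul]
      by_cases hst : s = s0
      · rw [if_pos hst, hst]
      · rw [if_neg hst]; ring
    intro x
    have := LinearMap.congr_fun hle x
    simpa using this
  have hψA : ∀ x, ψf (Aend x) = mu * ψf x := by
    have hle : ψf ∘ₗ (Aend : (Fin n → K) →ₗ[K] (Fin n → K)) = mu • ψf := by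
      refine bK.ext fun s => ?_
      simp only [LinearMap.comp_apply, LinearMap.smul_apply, smul_eq_mul]
      rw [show (Aend : (Fin n → K) →ₗ[K] (Fin n → K)) (bK s) = (s : K) • bK s by
        rw [hbK s, hAendap, hveq s]]
      rw [map_smul, hψdef, hcoord s s1, smul_eq_mul]
      by_cases hst : s = s1
      · rw [if_pos hst, hst]
      · rw [if_neg hst]; ring
    intro x
    have := LinearMap.congr_fun hle x
    simpa using this
  -- the theta invariance on wedges
  have hBA : ∀ x y : Fin n → K,
      theta φ ψf (ι K (Aend x) * ι K (Aend y)) = theta φ ψf (ι K x * ι K y) := by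
    intro x y
    rw [theta_ι_mul_ι, theta_ι_mul_ι, hφA, hφA, hψA, hψA]
    have h1 : lam * φ x * (mu * ψf y) - lam * φ y * (mu * ψf x)
        = (lam * mu) * (φ x * ψf y - φ y * ψf x) := by ring
    rw [h1, hlm, one_mul]
  -- integer side: bijectivity
  set T := extPowMap n 2 A with hT
  have hUnit : IsUnit (LinearMap.det (1 - T)) := by
    rcases hCS2 with h | h
    · rw [h]; exact isUnit_one
    · rw [h]; exact IsUnit.neg isUnit_one
  have hTbij : Function.Bijective ⇑(1 - T) :=
    bijective_of_isUnit_det (wedgeBasis ℤ n) _ hUnit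
  have hSbij : Function.Bijective ((1 - T).baseChange K) :=
    baseChange_bijective K _ hTbij
  -- bridge
  set jmap : (Fin n → ℤ) →ₗ[ℤ] (Fin n → K) :=
    LinearMap.compLeft (Algebra.linearMap ℤ K) (Fin n) with hjmap
  have hjap : ∀ (m : Fin n → ℤ) (i : Fin n), jmap m i = (m i : K) := fun m i => rfl
  set F : ExteriorAlgebra ℤ (Fin n → ℤ) →ₐ[ℤ] ExteriorAlgebra K (Fin n → K) :=
    ExteriorAlgebra.lift ℤ ⟨((ι K : (Fin n → K) →ₗ[K] ExteriorAlgebra K (Fin n → K)).restrictScalars ℤ).comp jmap,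
      fun m => (ι_sq_zero (jmap m)).trans (by simp)⟩ with hF
  have hFι : ∀ m, F (ι ℤ m) = ι K (jmap m) := by
    intro m
    rw [hF]
    exact ExteriorAlgebra.lift_ι_apply _ _ _ m
  have hj : ∀ m, jmap (Matrix.toLin' A m) = Matrix.toLin' AK (jmap m) := by
    intro m
    funext i
    rw [hjap, Matrix.toLin'_apply, Matrix.toLin'_apply, hAK]
    simp only [Matrix.mulVec, dotProduct, Matrix.map_apply]
    push_cast
    exact (Int.cast_sum (R := K) Finset.univ (fun x => A i x * m x)).trans
      (Finset.sum_congr rfl fun x _ => Int.cast_mul _ _)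
  have hFG : ∀ t, F (ExteriorAlgebra.map (Matrix.toLin' A) t)
      = ExteriorAlgebra.map (Matrix.toLin' AK) (F t) := by
    have heq : F.comp (ExteriorAlgebra.map (Matrix.toLin' A))
        = ((ExteriorAlgebra.map (Matrix.toLin' AK)).restrictScalars ℤ).comp F := by
      apply ExteriorAlgebra.hom_ext
      apply LinearMap.ext
      intro m
      show F (ExteriorAlgebra.map (Matrix.toLin' A) (ι ℤ m))
          = ExteriorAlgebra.map (Matrix.toLin' AK) (F (ι ℤ m))
      rw [map_apply_ι, hFι, hFι, map_apply_ι, hj]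
    intro t
    exact congrArg (fun (g : ExteriorAlgebra ℤ (Fin n → ℤ) →ₐ[ℤ] ExteriorAlgebra K (Fin n → K)) => g t) heq
  set ψ0 : (⋀[ℤ]^2 (Fin n → ℤ)) →ₗ[ℤ] ExteriorAlgebra K (Fin n → K) :=
    F.toLinearMap.comp (Submodule.subtype _) with hψ0
  set Ψ := LinearMap.liftBaseChange K ψ0 with hΨ
  have hψ0ap : ∀ x : ⋀[ℤ]^2 (Fin n → ℤ), ψ0 x = F (x : ExteriorAlgebra ℤ (Fin n → ℤ)) :=
    fun x => rfl
  have hTcoe : ∀ x : ⋀[ℤ]^2 (Fin n → ℤ),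
      ((T x : ⋀[ℤ]^2 (Fin n → ℤ)) : ExteriorAlgebra ℤ (Fin n → ℤ))
        = ExteriorAlgebra.map (Matrix.toLin' A) (x : ExteriorAlgebra ℤ (Fin n → ℤ)) :=
    fun x => rfl
  set G : ExteriorAlgebra K (Fin n → K) →ₗ[K] ExteriorAlgebra K (Fin n → K) :=
    (ExteriorAlgebra.map (Matrix.toLin' AK)).toLinearMap with hG
  have hGap : ∀ t, G t = ExteriorAlgebra.map (Matrix.toLin' AK) t := fun t => rfl
  have hint : ∀ z : K ⊗[ℤ] (⋀[ℤ]^2 (Fin n → ℤ)),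
      Ψ (T.baseChange K z) = G (Ψ z) := by
    intro z
    induction z using TensorProduct.induction_on with
    | zero => simp
    | tmul k x =>
      rw [LinearMap.baseChange_tmul, hΨ, LinearMap.liftBaseChange_tmul,
        LinearMap.liftBaseChange_tmul, map_smul, hψ0ap, hψ0ap, hTcoe, hFG, hGap]
    | add a b ha hb =>
      simp only [map_add, ha, hb]
  have hinv2 : ∀ z : K ⊗[ℤ] (⋀[ℤ]^2 (Fin n → ℤ)),
      theta φ ψf (G (Ψ z)) = theta φ ψf (Ψ z) := by
    intro z
    induction z using TensorProduct.induction_on with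
    | zero => simp
    | tmul k x =>
      rw [hΨ, LinearMap.liftBaseChange_tmul, map_smul, map_smul, map_smul, hψ0ap]
      congr 1
      have hx2 : (x : ExteriorAlgebra ℤ (Fin n → ℤ))
          ∈ LinearMap.range (ι ℤ (M := Fin n → ℤ)) * LinearMap.range (ι ℤ) := by
        rw [← show (⋀[ℤ]^2 (Fin n → ℤ))
            = LinearMap.range (ι ℤ (M := Fin n → ℤ)) * LinearMap.range (ι ℤ) from pow_two _]
        exact x.2
      refine Submodule.mul_induction_on hx2 ?_ ?_
      · rintro _ ⟨u, rfl⟩ _ ⟨v, rfl⟩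
        rw [map_mul, hFι, hFι, hGap, map_mul, map_apply_ι, map_apply_ι]
        exact hBA (jmap u) (jmap v)
      · intro a b ha hb
        simp only [map_add, ha, hb]
    | add a b ha hb =>
      simp only [map_add, ha, hb]
  -- the witness element
  have hjs : ∀ i : Fin n, jmap (stdv i) = (stdv i : Fin n → K) := by
    intro i
    funext j
    rw [hjap]
    simp [stdv, apply_ite]
  set v := vfun s0 with hv
  set w := vfun s1 with hw
  set z : K ⊗[ℤ] (⋀[ℤ]^2 (Fin n → ℤ)) :=
    ∑ i, ∑ j, (v i * w j) ⊗ₜ[ℤ]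
      (⟨ι ℤ (stdv i) * ι ℤ (stdv j), wedge_mem _ _⟩ : ⋀[ℤ]^2 (Fin n → ℤ)) with hz
  have hΨz : Ψ z = ι K v * ι K w := by
    rw [hz, map_sum]
    rw [Finset.sum_congr rfl (fun i _ => map_sum Ψ _ _)]
    rw [← wedgeE_apply (R := K) v w, bilin_expand (wedgeE (R := K) (n := n)) v w]
    refine Finset.sum_congr rfl fun i _ => Finset.sum_congr rfl fun j _ => ?_
    rw [hΨ, LinearMap.liftBaseChange_tmul, hψ0ap]
    rw [show ((⟨ι ℤ (stdv i) * ι ℤ (stdv j), wedge_mem _ _⟩ : ⋀[ℤ]^2 (Fin n → ℤ)) :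
        ExteriorAlgebra ℤ (Fin n → ℤ)) = ι ℤ (stdv i) * ι ℤ (stdv j) from rfl]
    rw [map_mul, hFι, hFι, hjs, hjs, wedgeE_apply]
  have hφv : φ v = 1 := by
    rw [hv, ← hbK s0, hφdef, hcoord s0 s0, if_pos rfl]
  have hψw : ψf w = 1 := by
    rw [hw, ← hbK s1, hψdef, hcoord s1 s1, if_pos rfl]
  have hφw : φ w = 0 := by
    rw [hw, ← hbK s1, hφdef, hcoord s1 s0, if_neg (fun h => hs01 h.symm)]
  have hψv : ψf v = 0 := by
    rw [hv, ← hbK s0, hψdef, hcoord s0 s1, if_neg hs01]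
  have hθz : theta φ ψf (Ψ z) = 1 := by
    rw [hΨz, theta_ι_mul_ι, hφv, hψw, hφw, hψv]
    ring
  obtain ⟨u, hu⟩ := hSbij.2 z
  have h0 : theta φ ψf (Ψ z) = 0 := by
    rw [← hu]
    rw [LinearMap.baseChange_sub, LinearMap.baseChange_one, LinearMap.sub_apply,
      Module.End.one_apply, map_sub, map_sub, hint u, hinv2 u, sub_self]
  rw [hθz] at h0
  exact one_ne_zero h0
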